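/- arXiv:1403.6807 — 2 statements merged into one kernel-verified Lean document; each statement's English description precedes it below -/
import Mathlib

section
/- Suppose $U : [a, z] \to \mathbb{R}$ and $\Psi : [a, z] \to [0,1]$ satisfy $(t - v)\Psi(v) \leq U(t) - U(v) \leq (t - v)\Psi(t)$ for all $t, v \in [a, z]$, and $\Psi$ is Riemann integrable. Then $U(t) = U(a) + \int_a^t \Psi(s)\,ds$ for all $t \in [a,z]$ (the envelope/payoff-equivalence formula). -/
open intervalIntegral

/-- Envelope / payoff-equivalence formula. -/
theorem envelope_formula (a z : ℝ) (U Ψ : ℝ → ℝ)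
    (hΨ : ∀ s ∈ Set.Icc a z, Ψ s ∈ Set.Icc (0:ℝ) 1)
    (hS : ∀ t ∈ Set.Icc a z, ∀ v ∈ Set.Icc a z,
      (t - v) * Ψ v ≤ U t - U v ∧ U t - U v ≤ (t - v) * Ψ t)
    (hInt : IntervalIntegrable Ψ MeasureTheory.volume a z) :
    ∀ t ∈ Set.Icc a z, U t = U a + ∫ s in a..t, Ψ s := by
  have hmono : ∀ v ∈ Set.Icc a z, ∀ t ∈ Set.Icc a z, v ≤ t → Ψ v ≤ Ψ t := by
    intro v hv t ht hvt
    rcases eq_or_lt_of_le hvt with rfl | h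
    · exact le_refl _
    · obtain ⟨h1, h2⟩ := hS t ht v hv
      nlinarith
  have hsub : ∀ v ∈ Set.Icc a z, ∀ t ∈ Set.Icc a z, v ≤ t →
      IntervalIntegrable Ψ MeasureTheory.volume v t := by
    intro v hv t ht hvt
    refine hInt.mono_set ?_
    rw [Set.uIcc_of_le hvt, Set.uIcc_of_le (le_trans hv.1 hv.2)]
    exact Set.Icc_subset_Icc hv.1 ht.2
  have key : ∀ v ∈ Set.Icc a z, ∀ t ∈ Set.Icc a z, v ≤ t →
      |U t - U v - ∫ s in v..t, Ψ s| ≤ (t - v) * (Ψ t - Ψ v) := by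
    intro v hv t ht hvt
    have hintvt := hsub v hv t ht hvt
    have hmem : ∀ s ∈ Set.Icc v t, s ∈ Set.Icc a z := fun s hs =>
      ⟨le_trans hv.1 hs.1, le_trans hs.2 ht.2⟩
    have hlow : (t - v) * Ψ v ≤ ∫ s in v..t, Ψ s := by
      have h := intervalIntegral.integral_mono_on hvt
        (_root_.intervalIntegrable_const (c := Ψ v)) hintvt
        (fun s hs => hmono v hv s (hmem s hs) hs.1)
      simpa [intervalIntegral.integral_const, smul_eq_mul, mul_comm] using h
    have hhigh : (∫ s in v..t, Ψ s) ≤ (t - v) * Ψ t := by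
      have h := intervalIntegral.integral_mono_on hvt hintvt
        (_root_.intervalIntegrable_const (c := Ψ t))
        (fun s hs => hmono s (hmem s hs) t ht hs.2)
      simpa [intervalIntegral.integral_const, smul_eq_mul, mul_comm] using h
    obtain ⟨h1, h2⟩ := hS t ht v hv
    rw [abs_le]
    constructor <;> linarith
  intro t ht
  have hat : a ≤ t := ht.1
  have haz : a ∈ Set.Icc a z := ⟨le_refl _, le_trans ht.1 ht.2⟩
  set L := t - a with hLdef
  have hL0 : 0 ≤ L := by simp [hLdef]; linarith
  have main : ∀ n : ℕ, |U t - U a - ∫ s in a..t, Ψ s| ≤ L / (n + 1) := by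
    intro n
    set m : ℕ := n + 1 with hm
    have hm0 : (0:ℝ) < m := by positivity
    set x : ℕ → ℝ := fun i => a + i * (L / m) with hx
    have hxmem : ∀ i ≤ m, x i ∈ Set.Icc a z := by
      intro i hi
      have h1 : (0:ℝ) ≤ (i:ℝ) * (L / m) := by positivity
      have h2 : (i:ℝ) * (L / m) ≤ (m:ℝ) * (L / m) := by
        apply mul_le_mul_of_nonneg_right (by exact_mod_cast hi) (by positivity)
      have h3 : (m:ℝ) * (L / m) = L := by field_simp
      constructor
      · simp [hx]; linarith
      · have : x i ≤ a + L := by simp only [hx]; linarith [h2, h3.le]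
        simp only [hLdef] at this
        linarith [ht.2]
    have hxstep : ∀ i, x (i+1) - x i = L / m := by
      intro i
      simp only [hx]
      push_cast
      ring
    have hx0 : x 0 = a := by simp [hx]
    have hxm : x m = t := by
      simp only [hx]
      field_simp
      simp [hLdef]
    have hxle : ∀ i, x i ≤ x (i+1) := by
      intro i
      simp only [hx]
      have h2 : (0:ℝ) ≤ L / m := by positivity
      have h3 : (i:ℝ) * (L / ((n:ℝ)+1)) ≤ ((i:ℝ)+1) * (L / ((n:ℝ)+1)) := by
        have h4 : (0:ℝ) ≤ L / ((n:ℝ)+1) := by positivity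
        nlinarith
      push_cast
      linarith
    set f : ℕ → ℝ := fun i => U (x i) - ∫ s in a..x i, Ψ s with hf
    have htel : ∑ i ∈ Finset.range m, (f (i+1) - f i) = f m - f 0 :=
      Finset.sum_range_sub f m
    have hterm : ∀ i < m, |f (i+1) - f i| ≤ (L / m) * (Ψ (x (i+1)) - Ψ (x i)) := by
      intro i hi
      have hmi : x i ∈ Set.Icc a z := hxmem i (le_of_lt hi)
      have hmi1 : x (i+1) ∈ Set.Icc a z := hxmem (i+1) hi
      have hadd : (∫ s in a..x i, Ψ s) + ∫ s in x i..x (i+1), Ψ s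
          = ∫ s in a..x (i+1), Ψ s :=
        intervalIntegral.integral_add_adjacent_intervals
          (hsub a haz (x i) hmi hmi.1) (hsub (x i) hmi (x (i+1)) hmi1 (hxle i))
      have heq : f (i+1) - f i
          = U (x (i+1)) - U (x i) - ∫ s in x i..x (i+1), Ψ s := by
        simp only [hf]
        linarith [hadd]
      rw [heq]
      have := key (x i) hmi (x (i+1)) hmi1 (hxle i)
      rwa [hxstep i] at this
    have hsumbound : |f m - f 0| ≤ (L / m) * (Ψ t - Ψ a) := by
      rw [← htel]
      calc |∑ i ∈ Finset.range m, (f (i+1) - f i)|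
          ≤ ∑ i ∈ Finset.range m, |f (i+1) - f i| := Finset.abs_sum_le_sum_abs _ _
        _ ≤ ∑ i ∈ Finset.range m, (L / m) * (Ψ (x (i+1)) - Ψ (x i)) :=
            Finset.sum_le_sum (fun i hi => hterm i (Finset.mem_range.mp hi))
        _ = (L / m) * ∑ i ∈ Finset.range m, (Ψ (x (i+1)) - Ψ (x i)) := by
            rw [Finset.mul_sum]
        _ = (L / m) * (Ψ (x m) - Ψ (x 0)) := by
            rw [Finset.sum_range_sub (fun i => Ψ (x i))]
        _ = (L / m) * (Ψ t - Ψ a) := by rw [hxm, hx0]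
    have hPsibound : Ψ t - Ψ a ≤ 1 := by
      have h1 := hΨ t ht
      have h2 := hΨ a haz
      have := h1.2; have := h2.1
      linarith [h1.2, h2.1]
    have hfm : f m - f 0 = U t - U a - ∫ s in a..t, Ψ s := by
      simp only [hf, hxm, hx0, intervalIntegral.integral_same]
      ring
    rw [hfm] at hsumbound
    calc |U t - U a - ∫ s in a..t, Ψ s| ≤ (L / m) * (Ψ t - Ψ a) := hsumbound
      _ ≤ (L / m) * 1 := by
          apply mul_le_mul_of_nonneg_left hPsibound (by positivity)
      _ = L / (n + 1) := by simp [hm]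
  have hten : Filter.Tendsto (fun n : ℕ => L / (n + 1)) Filter.atTop (nhds 0) := by
    have h1 := tendsto_const_div_atTop_nhds_zero_nat L
    have h2 := h1.comp (Filter.tendsto_add_atTop_nat 1)
    refine h2.congr (fun k => ?_)
    simp [Function.comp]
  have habs : |U t - U a - ∫ s in a..t, Ψ s| ≤ 0 :=
    ge_of_tendsto' hten (fun n => main n)
  have : U t - U a - ∫ s in a..t, Ψ s = 0 := abs_eq_zero.mp (le_antisymm habs (abs_nonneg _))
  linarith
end

section
/- Let $c > 0$, and for each bidder $i$ let $x_i > 0$ be its throughput and $t_i = c x_i$ its valuation with virtual valuation $w_i = t_i - (1 - F_i(t_i))/p_i(t_i)$, where $(1-F_i(t_i))/p_i(t_i) \geq 0$. Let $j \in \arg\max_i w_i$ and $k \in \arg\max_i x_i$. Then $x_k - \frac{1}{c}\cdot\frac{1 - F_k(c x_k)}{p_k(c x_k)} \leq x_j \leq x_k$. -/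
/-- Throughput bound for OAUSA relative to VCG. Here `g i` stands for the
    nonnegative quantity `(1 - F_i(t_i))/p_i(t_i)` evaluated at `t_i = c * x_i`, so that
    the virtual valuation is `w i = c * x i - g i`. -/
theorem throughput_bound (N : ℕ) (c : ℝ) (hc : 0 < c)
    (x g : Fin N → ℝ) (hx : ∀ i, 0 < x i) (hg : ∀ i, 0 ≤ g i)
    (w : Fin N → ℝ) (hw : ∀ i, w i = c * x i - g i)
    (j k : Fin N)
    (hj : ∀ i, w i ≤ w j) (hk : ∀ i, x i ≤ x k) :
    x k - (1 / c) * g k ≤ x j ∧ x j ≤ x k := by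
  have h := hj k
  rw [hw k, hw j] at h
  have hgj := hg j
  constructor
  · rw [sub_le_iff_le_add]
    rw [show x j + 1 / c * g k = (c * x j + g k) / c by field_simp, le_div_iff₀ hc]
    nlinarith
  · exact hk j
end
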